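/- Let b and m be integers with 2 ≤ b ≤ m, and let ℓ be an integer with 1 ≤ ℓ < b. Then there exists a critical factor of t_{b,m} of length ℓ — that is, there exists i ≥ 0 with t(i+j) = t(i+j+ℓ) for all 0 ≤ j < ℓ (a square of a factor of length ℓ occurs in t) — if and only if gcd(b − 1, m) divides ℓ. -/

import Mathlib

/-- The generalized Thue–Morse word: `t b m n = s_b(n) mod m`, valued in `ZMod m`. -/
def genTM (b m n : ℕ) : ZMod m := ((Nat.digits b n).sum : ZMod m)

lemma digitsum_mul_add (b n r : ℕ) (hb : 2 ≤ b) (hr : r < b) (hn : 0 < n) :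
    (Nat.digits b (b * n + r)).sum = r + (Nat.digits b n).sum := by
  have h0 : 0 < b * n + r := by nlinarith
  rw [Nat.digits_def' (by omega : 1 < b) h0]
  have h1 : (b * n + r) % b = r := by
    rw [Nat.mul_add_mod, Nat.mod_eq_of_lt hr]
  have h2 : (b * n + r) / b = n := by
    rw [Nat.mul_add_div (by omega), Nat.div_eq_of_lt hr, add_zero]
  rw [h1, h2, List.sum_cons]

lemma digitsum_of_lt (b r : ℕ) (hb : 2 ≤ b) (hr : r < b) : (Nat.digits b r).sum = r := by
  rcases Nat.eq_zero_or_pos r with h | h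
  · subst h; simp
  · rw [Nat.digits_def' (by omega : 1 < b) h, Nat.mod_eq_of_lt hr, Nat.div_eq_of_lt hr]
    simp

lemma digitsum_pow_sub_one (b : ℕ) (hb : 2 ≤ b) :
    ∀ c : ℕ, (Nat.digits b (b ^ c - 1)).sum = c * (b - 1) := by
  intro c
  induction c with
  | zero => simp
  | succ c ih =>
    rcases Nat.eq_zero_or_pos c with hc | hc
    · subst hc
      have h : b ^ (0 + 1) - 1 = b - 1 := by rw [zero_add, pow_one]
      rw [h, digitsum_of_lt b (b - 1) hb (by omega)]
      omega
    · have h1 : 1 ≤ b ^ c := Nat.one_le_pow _ _ (by omega)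
      have hge : b ≤ b ^ c := Nat.le_self_pow (by omega) b
      have h2 : b ^ (c + 1) = b * b ^ c := by ring
      have h3 : b * (b ^ c - 1) = b * b ^ c - b := by
        rw [Nat.mul_sub, mul_one]
      have key : b ^ (c + 1) - 1 = b * (b ^ c - 1) + (b - 1) := by
        rw [h3, ← h2]
        have hle : b ≤ b ^ (c + 1) := by
          calc b = b ^ 1 := (pow_one b).symm
            _ ≤ b ^ (c + 1) := Nat.pow_le_pow_right (by omega) (by omega)
        omega
      rw [key, digitsum_mul_add b _ _ hb (by omega) (by omega), ih, Nat.succ_mul]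
      exact add_comm _ _

lemma digitsum_pow_sub (b c k : ℕ) (hb : 2 ≤ b) (hc : 1 ≤ c) (hk1 : 1 ≤ k) (hk : k < b) :
    (Nat.digits b (b ^ c - k)).sum = (b - k) + (c - 1) * (b - 1) := by
  obtain ⟨c', rfl⟩ : ∃ c', c = c' + 1 := ⟨c - 1, by omega⟩
  rcases Nat.eq_zero_or_pos c' with hc' | hc'
  · subst hc'
    have h : b ^ (0 + 1) - k = b - k := by rw [zero_add, pow_one]
    rw [h, digitsum_of_lt b (b - k) hb (by omega)]
    simp
  · have h1 : 1 ≤ b ^ c' := Nat.one_le_pow _ _ (by omega)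
    have hge : b ≤ b ^ c' := Nat.le_self_pow (by omega) b
    have h2 : b ^ (c' + 1) = b * b ^ c' := by ring
    have h3 : b * (b ^ c' - 1) = b * b ^ c' - b := by
      rw [Nat.mul_sub, mul_one]
    have key : b ^ (c' + 1) - k = b * (b ^ c' - 1) + (b - k) := by
      rw [h3, ← h2]
      have hle : b ≤ b ^ (c' + 1) := by
        calc b = b ^ 1 := (pow_one b).symm
          _ ≤ b ^ (c' + 1) := Nat.pow_le_pow_right (by omega) (by omega)
      omega
    rw [key, digitsum_mul_add b _ _ hb (by omega) (by omega),
      digitsum_pow_sub_one b hb]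
    simp

lemma digitsum_pow_add (b c j : ℕ) (hb : 2 ≤ b) (hc : 1 ≤ c) (hj : j < b) :
    (Nat.digits b (b ^ c + j)).sum = 1 + j := by
  have hone : ∀ c' : ℕ, (Nat.digits b (b ^ c')).sum = 1 := by
    intro c'
    induction c' with
    | zero => simpa using digitsum_of_lt b 1 hb (by omega)
    | succ c' ih =>
      have h : b ^ (c' + 1) = b * b ^ c' + 0 := by ring
      rw [h, digitsum_mul_add b _ _ hb (by omega) (Nat.pow_pos (by omega)), ih]
  obtain ⟨c', rfl⟩ : ∃ c', c = c' + 1 := ⟨c - 1, by omega⟩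
  have h : b ^ (c' + 1) + j = b * b ^ c' + j := by ring
  rw [h, digitsum_mul_add b _ _ hb hj (Nat.pow_pos (by omega)), hone]
  omega

/-- in the square case (`2 ≤ b ≤ m`), for `1 ≤ ℓ < b`, there exists a
critical factor of length `ℓ` (a square of a factor of length `ℓ` occurs in `t_{b,m}`)
if and only if `gcd(b − 1, m) ∣ ℓ`. -/
theorem genTM_exists_critical_factor_iff (b m ℓ : ℕ) (hb : 2 ≤ b) (hbm : b ≤ m)
    (hℓ1 : 1 ≤ ℓ) (hℓb : ℓ < b) :
    (∃ i : ℕ, ∀ j : ℕ, j < ℓ → genTM b m (i + j) = genTM b m (i + j + ℓ)) ↔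
    Nat.gcd (b - 1) m ∣ ℓ := by
  constructor
  · rintro ⟨i, h⟩
    rcases eq_or_lt_of_le hb with hb2 | hb3
    · rw [← hb2]
      simp
    · have hbmod : b % (b - 1) = 1 := by
        rw [Nat.mod_eq_sub_mod (by omega : b - 1 ≤ b)]
        have h' : b - (b - 1) = 1 := by omega
        rw [h']
        exact Nat.mod_eq_of_lt (by omega)
      have h0 := h 0 (by omega)
      simp only [add_zero] at h0
      unfold genTM at h0
      have hm : (Nat.digits b i).sum ≡ (Nat.digits b (i + ℓ)).sum [MOD m] :=
        (ZMod.natCast_eq_natCast_iff _ _ _).mp h0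
      have hmZ : ((Nat.digits b i).sum : ℤ) ≡ ((Nat.digits b (i + ℓ)).sum : ℤ) [ZMOD (m:ℤ)] :=
        Int.natCast_modEq_iff.mpr hm
      have ha1 : (Nat.digits b i).sum ≡ i [MOD b - 1] :=
        (Nat.modEq_digits_sum (b - 1) b hbmod i).symm
      have ha2 : (Nat.digits b (i + ℓ)).sum ≡ i + ℓ [MOD b - 1] :=
        (Nat.modEq_digits_sum (b - 1) b hbmod (i + ℓ)).symm
      have ha1Z : ((Nat.digits b i).sum : ℤ) ≡ (i : ℤ) [ZMOD ((b - 1 : ℕ) : ℤ)] :=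
        Int.natCast_modEq_iff.mpr ha1
      have ha2Z : ((Nat.digits b (i + ℓ)).sum : ℤ) ≡ ((i + ℓ : ℕ) : ℤ) [ZMOD ((b - 1 : ℕ) : ℤ)] :=
        Int.natCast_modEq_iff.mpr ha2
      set S1 : ℤ := ((Nat.digits b i).sum : ℤ)
      set S2 : ℤ := ((Nat.digits b (i + ℓ)).sum : ℤ)
      have hdm : (m : ℤ) ∣ S2 - S1 := Int.modEq_iff_dvd.mp hmZ
      have hdb : ((b - 1 : ℕ) : ℤ) ∣ (S2 - S1) - ℓ := by
        have e1 : ((b - 1 : ℕ) : ℤ) ∣ (i : ℤ) - S1 := Int.modEq_iff_dvd.mp ha1Z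
        have e2 : ((b - 1 : ℕ) : ℤ) ∣ ((i + ℓ : ℕ) : ℤ) - S2 := Int.modEq_iff_dvd.mp ha2Z
        rw [Nat.cast_add] at e2
        have e3 : (S2 - S1) - ℓ = ((i : ℤ) - S1) - (((i : ℤ) + ℓ) - S2) := by ring
        rw [e3]
        exact dvd_sub e1 e2
      have hg : ((Nat.gcd (b - 1) m : ℕ) : ℤ) ∣ (ℓ : ℤ) := by
        have g1 : ((Nat.gcd (b - 1) m : ℕ) : ℤ) ∣ ((b - 1 : ℕ) : ℤ) :=
          Int.natCast_dvd_natCast.mpr (Nat.gcd_dvd_left _ _)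
        have g2 : ((Nat.gcd (b - 1) m : ℕ) : ℤ) ∣ (m : ℤ) :=
          Int.natCast_dvd_natCast.mpr (Nat.gcd_dvd_right _ _)
        have e : (ℓ : ℤ) = (S2 - S1) - ((S2 - S1) - ℓ) := by ring
        rw [e]
        exact dvd_sub (g2.trans hdm) (g1.trans hdb)
      exact_mod_cast hg
  · intro hd
    obtain ⟨e, he⟩ := hd
    have hbez : (Nat.gcd (b - 1) m : ℤ) =
        (b - 1 : ℕ) * Nat.gcdA (b - 1) m + m * Nat.gcdB (b - 1) m :=
      Nat.gcd_eq_gcd_ab (b - 1) m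
    set A : ℤ := Nat.gcdA (b - 1) m
    set B : ℤ := Nat.gcdB (b - 1) m
    have hm0 : 1 ≤ m := by omega
    set c : ℕ := ((A * e) % (m : ℤ)).toNat + m with hcc
    have hc1 : 1 ≤ c := by omega
    have hcZ : (c : ℤ) = (A * e) % (m : ℤ) + m := by
      have hnn : (0 : ℤ) ≤ (A * e) % (m : ℤ) :=
        Int.emod_nonneg _ (by exact_mod_cast (by omega : m ≠ 0))
      rw [hcc]
      push_cast
      rw [Int.toNat_of_nonneg hnn]
    have hℓZ : (ℓ : ℤ) = ((b - 1 : ℕ) : ℤ) * (A * e) + (m : ℤ) * (B * e) := by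
      have h' : (ℓ : ℤ) = (Nat.gcd (b - 1) m : ℤ) * e := by
        rw [he]; push_cast; ring
      rw [h', hbez]; ring
    have hc2 : (m : ℤ) ∣ (c : ℤ) - A * e := by
      rw [hcZ, Int.emod_def]
      exact ⟨1 - A * e / m, by ring⟩
    have hkeyd : (m : ℤ) ∣ ((c * (b - 1) : ℕ) : ℤ) - (ℓ : ℤ) := by
      obtain ⟨q, hq⟩ := hc2
      refine ⟨((b - 1 : ℕ) : ℤ) * q - B * e, ?_⟩
      have hcast : ((c * (b - 1) : ℕ) : ℤ) = (c : ℤ) * ((b - 1 : ℕ) : ℤ) := by push_cast; ring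
      rw [hcast, hℓZ]
      have hce : (c : ℤ) = A * e + m * q := by linarith
      rw [hce]; ring
    have hkey : ((c * (b - 1) : ℕ) : ZMod m) = ((ℓ : ℕ) : ZMod m) := by
      have hmod : ((c * (b - 1) : ℕ) : ℤ) ≡ (ℓ : ℤ) [ZMOD (m : ℤ)] :=
        Int.modEq_iff_dvd.mpr (by obtain ⟨q, hq⟩ := hkeyd; exact ⟨-q, by linarith⟩)
      have h' := (ZMod.intCast_eq_intCast_iff _ _ _).mpr hmod
      push_cast at h' ⊢
      exact h'
    refine ⟨b ^ c - ℓ, fun j hj => ?_⟩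
    have hbc : b ≤ b ^ c := by
      calc b = b ^ 1 := (pow_one b).symm
        _ ≤ b ^ c := Nat.pow_le_pow_right (by omega) hc1
    have e2 : b ^ c - ℓ + j + ℓ = b ^ c + j := by omega
    have e1 : b ^ c - ℓ + j = b ^ c - (ℓ - j) := by omega
    unfold genTM
    rw [e2, e1, digitsum_pow_sub b c (ℓ - j) hb hc1 (by omega) (by omega),
      digitsum_pow_add b c j hb hc1 (by omega)]
    push_cast [Nat.cast_sub (by omega : ℓ - j ≤ b), Nat.cast_sub (by omega : j ≤ ℓ),
      Nat.cast_sub (by omega : 1 ≤ c), Nat.cast_sub (by omega : 1 ≤ b)] at hkey ⊢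
    linear_combination hkey
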